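/- arXiv:1901.08745 — 2 statements merged into one kernel-verified Lean document; each statement's English description precedes it below -/
import Mathlib

section
/- Let $\Phi:[1,\infty)\to(0,\infty)$ be a continuous strictly increasing function with derivative $\Phi'(r)=\ell(r)/r$ where $\ell:(0,\infty)\to(0,\infty)$ is continuous, and let $\ell^*(r)=\sup_{u\in[1,r]}\ell(u)$, with $C_3 \ge 1$ a constant such that $\ell(r) \le \ell^*(r) \le C_3 \ell(r)$ for $r>2$. Then for all $u \ge v > \Phi(2)$ in the range of $\Phi$, $\Phi^{-1}(u)/\Phi^{-1}(v) \le \exp\!\big(C_3 (u-v)/\ell^*(\Phi^{-1}(v))\big)$. -/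
/-- growth control of the inverse of `Φ` via `ℓ*`.
    Stated with `a = Φ⁻¹(u)`, `b = Φ⁻¹(v)`. -/
theorem stmt_5 (ℓ Φ : ℝ → ℝ) (C₃ : ℝ) (hC₃ : 1 ≤ C₃)
    (hℓpos : ∀ x > (0:ℝ), 0 < ℓ x) (hℓcont : ContinuousOn ℓ (Set.Ioi 0))
    (hΦderiv : ∀ r ≥ (1:ℝ), HasDerivAt Φ (ℓ r / r) r)
    (hΦmono : StrictMonoOn Φ (Set.Ici 1))
    (hΦcont : ContinuousOn Φ (Set.Ici 1))
    (ℓstar : ℝ → ℝ)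
    (hℓstar : ∀ r ≥ (1:ℝ), ℓstar r = sSup (ℓ '' Set.Icc 1 r))
    (hbound : ∀ r > (2:ℝ), ℓ r ≤ ℓstar r ∧ ℓstar r ≤ C₃ * ℓ r) :
    ∀ a b : ℝ, 2 < b → b ≤ a →
      a / b ≤ Real.exp (C₃ * (Φ a - Φ b) / ℓstar b) := by
  intro a b hb hba
  have hC₃0 : (0:ℝ) < C₃ := lt_of_lt_of_le one_pos hC₃
  have hb0 : (0:ℝ) < b := by linarith
  have ha0 : (0:ℝ) < a := lt_of_lt_of_le hb0 hba
  -- ℓstar b > 0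
  have hℓsb_pos : 0 < ℓstar b := lt_of_lt_of_le (hℓpos b hb0) (hbound b hb).1
  -- monotonicity of ℓstar on [b, a]
  have hmono : ∀ r, b ≤ r → ℓstar b ≤ ℓstar r := by
    intro r hr
    have hr2 : (2:ℝ) < r := lt_of_lt_of_le hb hr
    rw [hℓstar b (by linarith), hℓstar r (by linarith)]
    apply csSup_le_csSup
    · apply IsCompact.bddAbove_image isCompact_Icc
      exact hℓcont.mono (fun x hx => lt_of_lt_of_le one_pos hx.1)
    · exact ⟨ℓ 1, Set.mem_image_of_mem ℓ ⟨le_refl 1, by linarith⟩⟩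
    · exact Set.image_mono (Set.Icc_subset_Icc_right hr)
  -- pointwise bound on [b, a]
  have hpt : ∀ r ∈ Set.Icc b a, ℓstar b / C₃ / r ≤ ℓ r / r := by
    intro r hr
    have hr2 : (2:ℝ) < r := lt_of_lt_of_le hb hr.1
    have h1 : ℓstar b ≤ C₃ * ℓ r := le_trans (hmono r hr.1) (hbound r hr2).2
    have h2 : ℓstar b / C₃ ≤ ℓ r := (div_le_iff₀' hC₃0).mpr h1
    exact div_le_div_of_nonneg_right h2 (by linarith) -- wrong name maybe
  -- FTC
  have hsub : Set.uIcc b a ⊆ Set.Ioi (0:ℝ) := by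
    rw [Set.uIcc_of_le hba]
    exact fun x hx => lt_of_lt_of_le hb0 hx.1
  have hcont : ContinuousOn (fun r => ℓ r / r) (Set.uIcc b a) := by
    apply ContinuousOn.div (hℓcont.mono hsub) continuousOn_id
    exact fun x hx => ne_of_gt (hsub hx)
  have hint : IntervalIntegrable (fun r => ℓ r / r) MeasureTheory.volume b a :=
    hcont.intervalIntegrable
  have hftc : ∫ r in b..a, ℓ r / r = Φ a - Φ b := by
    apply intervalIntegral.integral_eq_sub_of_hasDerivAt _ hint
    intro r hr
    rw [Set.uIcc_of_le hba] at hr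
    exact hΦderiv r (by linarith [hr.1])
  -- lower bound on the integral
  have hint2 : IntervalIntegrable (fun r => ℓstar b / C₃ / r) MeasureTheory.volume b a := by
    apply ContinuousOn.intervalIntegrable
    apply ContinuousOn.div continuousOn_const continuousOn_id
    exact fun x hx => ne_of_gt (hsub hx)
  have hcmp : ∫ r in b..a, ℓstar b / C₃ / r ≤ ∫ r in b..a, ℓ r / r := by
    apply intervalIntegral.integral_mono_on hba hint2 hint
    exact hpt
  have hval : ∫ r in b..a, ℓstar b / C₃ / r = ℓstar b / C₃ * Real.log (a / b) := by
    have : ∫ r in b..a, ℓstar b / C₃ / r = ℓstar b / C₃ * ∫ r in b..a, 1 / r := by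
      rw [← intervalIntegral.integral_const_mul]
      congr 1; ext r; ring
    rw [this, integral_one_div (fun h => lt_irrefl (0:ℝ) (hsub h))]
  have hlog : Real.log (a / b) ≤ C₃ * (Φ a - Φ b) / ℓstar b := by
    rw [hval, hftc] at hcmp
    rw [le_div_iff₀ hℓsb_pos]
    have h' := mul_le_mul_of_nonneg_left hcmp hC₃0.le
    rw [show C₃ * (ℓstar b / C₃ * Real.log (a / b)) = Real.log (a / b) * ℓstar b from by
      field_simp] at h'
    linarith
  calc a / b = Real.exp (Real.log (a / b)) := (Real.exp_log (div_pos ha0 hb0)).symm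
    _ ≤ Real.exp (C₃ * (Φ a - Φ b) / ℓstar b) := Real.exp_le_exp.mpr hlog
end

section
/- Let $Y$ be a one-dimensional pure jump symmetric L\'evy process with L\'evy density $\nu(y)$ (symmetric, radially non-increasing on $(0,\infty)$, absolutely continuous with non-increasing density derivative assumptions as needed) satisfying $\kappa_1 y^{-1}\ell(y^{-1}) \le \nu(y) \le \kappa_2 y^{-1}\ell(y^{-1})$ for $y>0$, where $\ell$ satisfies the weak upper scaling condition $\ell(R)/\ell(r) \le c(R/r)^{\alpha_2}$ for $1\le r \le R$ with $\alpha_2 < 1$. Let $\psi(x) = 2\int_0^\infty (1-\cos(xy))\nu(y)\,dy$ be its characteristic exponent. Then for every $\lambda > 1$ there exists $c(\lambda)>0$ such that $\psi(\lambda x) - \psi(x) \le c(\lambda)\,\ell(x)$ for all $x \ge 1$. -/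
open MeasureTheory Set intervalIntegral

lemma cosint (b l u : ℝ) (hb : b ≠ 0) : ∫ t in l..u, Real.cos (b * t) = (Real.sin (b*u) - Real.sin (b*l))/b := by
  rw [intervalIntegral.integral_comp_mul_left (fun x => Real.cos x) hb, integral_cos, smul_eq_mul]
  ring

lemma osc_aux (b l u : ℝ) (hb : 0 < b) :
    |∫ t in Set.Ioo l u, Real.cos (b * t)| ≤ 2 / b := by
  rcases le_or_gt u l with h | h
  · rw [Set.Ioo_eq_empty (by simpa using h)]
    simp; positivity
  · rw [← MeasureTheory.integral_Ioc_eq_integral_Ioo,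
      ← intervalIntegral.integral_of_le h.le, cosint b l u hb.ne']
    rw [abs_div, abs_of_pos hb, div_le_div_iff_of_pos_right hb]
    calc |Real.sin (b*u) - Real.sin (b*l)| ≤ |Real.sin (b*u)| + |Real.sin (b*l)| := abs_sub _ _
    _ ≤ 1 + 1 := add_le_add (Real.abs_sin_le_one _) (Real.abs_sin_le_one _)
    _ = 2 := by norm_num

lemma osc_bound (g : ℝ → ℝ) (a b : ℝ) (hb : 0 < b)
    (hmono : ∀ r s, a ≤ r → r ≤ s → g s ≤ g r) (hpos : ∀ y, a ≤ y → 0 ≤ g y)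
    (hint : IntegrableOn g (Set.Ioi a)) :
    |∫ y in Set.Ioi a, Real.cos (b * y) * g y| ≤ 2 * g a / b := by
  classical
  set G : ℝ → ℝ := fun t => g (max t a) with hG
  have hGanti : Antitone G := fun t₁ t₂ h =>
    hmono _ _ (le_max_right _ _) (max_le_max h le_rfl)
  have hGmeas : Measurable G := hGanti.measurable
  have hGnonneg : ∀ t, 0 ≤ G t := fun t => hpos _ (le_max_right _ _)
  have hGle : ∀ t, G t ≤ g a := fun t => hmono a _ le_rfl (le_max_right _ _)
  have hGeq : ∀ t ∈ Set.Ioi a, G t = g t := fun t ht => by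
    simp only [hG]; rw [max_eq_left (le_of_lt ht)]
  have hGint : IntegrableOn G (Set.Ioi a) :=
    hint.congr_fun (fun t ht => (hGeq t ht).symm) measurableSet_Ioi
  set F : ℝ → ℝ → ℝ := fun t s => if 0 < s ∧ s < G t then Real.cos (b*t) else 0 with hF
  set A : Set (ℝ × ℝ) := {p | 0 < p.2 ∧ p.2 < G p.1} with hA
  have hAmeas : MeasurableSet A := by
    have h1 : MeasurableSet {p : ℝ×ℝ | 0 < p.2} :=
      measurableSet_lt measurable_const measurable_snd
    have h2 : MeasurableSet {p : ℝ×ℝ | p.2 < G p.1} :=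
      measurableSet_lt measurable_snd (hGmeas.comp measurable_fst)
    exact h1.inter h2
  have hFun : Function.uncurry F = A.indicator (fun p => Real.cos (b * p.1)) := by
    funext p
    simp only [Function.uncurry, hF, Set.indicator, hA, Set.mem_setOf_eq]
  have hFmeas : Measurable (Function.uncurry F) := by
    rw [hFun]
    exact (Measurable.indicator ((Real.continuous_cos.measurable).comp
      ((measurable_const_mul b).comp measurable_fst)) hAmeas)
  -- inner integral in s
  have stepA : ∀ t : ℝ, ∫ s in Set.Ioi (0:ℝ), F t s = Real.cos (b*t) * G t := by
    intro t
    have : (fun s => F t s) = (Set.Ioo (0:ℝ) (G t)).indicator (fun _ => Real.cos (b*t)) := by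
      funext s
      simp only [hF, Set.indicator, Set.mem_Ioo]
    rw [this, MeasureTheory.integral_indicator measurableSet_Ioo,
      Measure.restrict_restrict measurableSet_Ioo,
      Set.inter_eq_left.2 (Set.Ioo_subset_Ioi_self), setIntegral_const, smul_eq_mul]
    rw [measureReal_def, Real.volume_Ioo, ENNReal.toReal_ofReal (by simpa using hGnonneg t)]
    ring
  -- product integrability
  have hFint : Integrable (Function.uncurry F)
      ((volume.restrict (Set.Ioi a)).prod (volume.restrict (Set.Ioi (0:ℝ)))) := by
    rw [MeasureTheory.integrable_prod_iff (hFmeas.aestronglyMeasurable)]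
    constructor
    · refine Filter.Eventually.of_forall (fun t => ?_)
      have : (fun s => F t s) = (Set.Ioo (0:ℝ) (G t)).indicator (fun _ => Real.cos (b*t)) := by
        funext s
        simp only [hF, Set.indicator, Set.mem_Ioo]
      have huncur : (fun y => Function.uncurry F (t, y)) = fun s => F t s := rfl
      rw [huncur, this]
      exact ((integrable_indicator_iff measurableSet_Ioo).2
        (integrableOn_const (by rw [Real.volume_Ioo]; exact ENNReal.ofReal_ne_top))).restrict
    · have heq : ∀ t, (∫ s in Set.Ioi (0:ℝ), ‖F t s‖) = |Real.cos (b*t)| * G t := by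
        intro t
        have : (fun s => ‖F t s‖) = (Set.Ioo (0:ℝ) (G t)).indicator (fun _ => |Real.cos (b*t)|) := by
          funext s
          simp only [hF, Set.indicator, Set.mem_Ioo, Real.norm_eq_abs]
          split <;> simp
        rw [this, MeasureTheory.integral_indicator measurableSet_Ioo,
          Measure.restrict_restrict measurableSet_Ioo,
          Set.inter_eq_left.2 (Set.Ioo_subset_Ioi_self), setIntegral_const, smul_eq_mul]
        rw [measureReal_def, Real.volume_Ioo, ENNReal.toReal_ofReal (by simpa using hGnonneg t)]
        ring
      have : Integrable (fun t => |Real.cos (b*t)| * G t) (volume.restrict (Set.Ioi a)) := by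
        refine Integrable.mono hGint ?_ ?_
        · exact ((Real.continuous_cos.measurable.comp (measurable_const_mul b)).abs.mul
            hGmeas).aestronglyMeasurable
        · refine Filter.Eventually.of_forall (fun t => ?_)
          rw [Real.norm_eq_abs, Real.norm_eq_abs, abs_mul, abs_abs, abs_of_nonneg (hGnonneg t)]
          nth_rewrite 2 [← one_mul (G t)]
          exact mul_le_mul_of_nonneg_right (Real.abs_cos_le_one _) (hGnonneg t)
      exact this.congr (Filter.Eventually.of_forall (fun t => (heq t).symm))
  -- swap
  have swap := MeasureTheory.integral_integral_swap (f := F) hFint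
  -- LHS identification
  have lhs_eq : (∫ y in Set.Ioi a, Real.cos (b * y) * g y)
      = ∫ s in Set.Ioi (0:ℝ), ∫ t in Set.Ioi a, F t s := by
    have h1 : (∫ y in Set.Ioi a, Real.cos (b * y) * g y)
        = ∫ t in Set.Ioi a, Real.cos (b * t) * G t :=
      setIntegral_congr_fun measurableSet_Ioi (fun t ht => by rw [hGeq t ht])
    have h2 : (∫ t in Set.Ioi a, Real.cos (b * t) * G t)
        = ∫ t in Set.Ioi a, ∫ s in Set.Ioi (0:ℝ), F t s :=
      integral_congr_ae (Filter.Eventually.of_forall (fun t => (stepA t).symm))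
    rw [h1, h2, swap]
  rw [lhs_eq]
  set H : ℝ → ℝ := fun s => ∫ t in Set.Ioi a, F t s with hHdef
  have hTmeas : ∀ s : ℝ, MeasurableSet {t : ℝ | s < G t} := fun s =>
    measurableSet_lt measurable_const hGmeas
  have hHint : Integrable H (volume.restrict (Set.Ioi (0:ℝ))) := by
    have := hFint.integral_prod_right
    exact this
  have hga : 0 ≤ g a := hpos a le_rfl
  have hind_int : Integrable (fun s => (2/b) * (Set.Ioo (0:ℝ) (g a)).indicator (fun _ => (1:ℝ)) s)
      (volume.restrict (Set.Ioi (0:ℝ))) := by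
    refine Integrable.const_mul ?_ _
    exact ((integrable_indicator_iff measurableSet_Ioo).2
      (integrableOn_const (by rw [Real.volume_Ioo]; exact ENNReal.ofReal_ne_top))).restrict
  have hH_bound : ∀ s ∈ Set.Ioi (0:ℝ), |H s| ≤ (2/b) * (Set.Ioo (0:ℝ) (g a)).indicator (fun _ => (1:ℝ)) s := by
    intro s hs
    have hs' : (0:ℝ) < s := hs
    by_cases hsga : s < g a
    · have hFs : (fun t => F t s) = ({t : ℝ | s < G t}).indicator (fun t => Real.cos (b*t)) := by
        funext t
        simp only [hF, Set.indicator, Set.mem_setOf_eq, hs', true_and]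
      have hHs : H s = ∫ t in {t : ℝ | s < G t} ∩ Set.Ioi a, Real.cos (b*t) := by
        rw [hHdef]
        simp only
        rw [hFs, MeasureTheory.integral_indicator (hTmeas s),
          Measure.restrict_restrict (hTmeas s)]
      set E : Set ℝ := {t : ℝ | s < G t} ∩ Set.Ioi a with hEdef
      have hind1 : (Set.Ioo (0:ℝ) (g a)).indicator (fun _ => (1:ℝ)) s = 1 := by
        rw [Set.indicator_of_mem (Set.mem_Ioo.2 ⟨hs', hsga⟩)]
      rw [hind1, mul_one, hHs]
      rcases Set.eq_empty_or_nonempty E with hE | hne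
      · rw [hE]
        simp
        positivity
      · have hbdd_below : BddBelow E := ⟨a, fun x hx => le_of_lt hx.2⟩
        have hbdd_above : BddAbove E := by
          by_contra hub
          rw [not_bddAbove_iff] at hub
          have key : Set.Ioi a ⊆ {x : ℝ | s ≤ g x} := by
            intro y hy
            obtain ⟨t, htE, hyt⟩ := hub y
            have : s < G y := lt_of_lt_of_le htE.1 (hGanti hyt.le)
            rw [hGeq y hy] at this
            exact this.le
          have hfin := hint.measure_ge_lt_top hs'
          rw [Measure.restrict_apply' measurableSet_Ioi,
            Set.inter_eq_right.2 key, Real.volume_Ioi] at hfin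
          exact (lt_irrefl _ hfin).elim
        set l := sInf E with hl
        set u := sSup E with hu
        have hEs : E ⊆ Set.Icc l u := fun x hx => ⟨csInf_le hbdd_below hx, le_csSup hbdd_above hx⟩
        have hIooE : Set.Ioo l u ⊆ E := by
          intro y hy
          obtain ⟨e1, he1E, he1⟩ := exists_lt_of_csInf_lt hne hy.1
          obtain ⟨e2, he2E, he2⟩ := exists_lt_of_lt_csSup hne hy.2
          exact ⟨lt_of_lt_of_le he2E.1 (hGanti he2.le), lt_trans he1E.2 he1⟩
        have hEae : E =ᵐ[volume] Set.Ioo l u := by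
          rw [MeasureTheory.ae_eq_set]
          constructor
          · refine measure_mono_null (fun x hx => ?_)
              (((Set.countable_singleton u).insert l).measure_zero _)
            have hxI := hEs hx.1
            have hxn := hx.2
            simp only [Set.mem_Ioo, not_and_or, not_lt] at hxn
            rcases hxn with h | h
            · exact Set.mem_insert_iff.2 (Or.inl (le_antisymm h hxI.1))
            · exact Set.mem_insert_iff.2 (Or.inr (le_antisymm hxI.2 h))
          · rw [Set.diff_eq_empty.2 hIooE]
            simp
        rw [MeasureTheory.setIntegral_congr_set hEae]
        exact osc_aux b l u hb
    · have hFz : ∀ t, F t s = 0 := by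
        intro t
        simp only [hF, ite_eq_right_iff]
        intro hcon
        exact absurd (lt_of_lt_of_le hcon.2 (hGle t)) (not_lt.2 (not_lt.1 hsga))
      have : H s = 0 := by
        rw [hHdef]
        simp only [hFz]
        simp
      rw [this, abs_zero]
      exact mul_nonneg (by positivity) (Set.indicator_nonneg (fun _ _ => zero_le_one) s)
  calc |∫ s in Set.Ioi (0:ℝ), H s| ≤ ∫ s in Set.Ioi (0:ℝ), |H s| :=
        by simpa [Real.norm_eq_abs] using
          MeasureTheory.norm_integral_le_integral_norm (f := H) (μ := volume.restrict (Set.Ioi (0:ℝ)))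
    _ ≤ ∫ s in Set.Ioi (0:ℝ), (2/b) * (Set.Ioo (0:ℝ) (g a)).indicator (fun _ => (1:ℝ)) s :=
        setIntegral_mono_on hHint.abs hind_int measurableSet_Ioi hH_bound
    _ = (2/b) * ∫ s in Set.Ioi (0:ℝ), (Set.Ioo (0:ℝ) (g a)).indicator (fun _ => (1:ℝ)) s :=
        integral_const_mul _ _
    _ = 2 * g a / b := by
        rw [MeasureTheory.integral_indicator measurableSet_Ioo,
          Measure.restrict_restrict measurableSet_Ioo,
          Set.inter_eq_left.2 (Set.Ioo_subset_Ioi_self), setIntegral_const, smul_eq_mul,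
          measureReal_def, Real.volume_Ioo, ENNReal.toReal_ofReal (by simpa using hga)]
        ring

set_option maxHeartbeats 1600000 in
/-- `ψ(λx) - ψ(x) ≤ c(λ) ℓ(x)` for `x ≥ 1` in dimension one. -/
theorem stmt_8 (ν ℓ : ℝ → ℝ) (κ₁ κ₂ c α₂ : ℝ)
    (hκ₁ : 0 < κ₁) (hκ₂ : 0 < κ₂) (hc : 0 < c) (hα₂ : α₂ < 1)
    (hℓpos : ∀ x > (0:ℝ), 0 < ℓ x)
    (hνpos : ∀ y > (0:ℝ), 0 < ν y)
    (hνmono : ∀ r s : ℝ, 0 < r → r ≤ s → ν s ≤ ν r)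
    (hν : ∀ y > (0:ℝ), κ₁ * y⁻¹ * ℓ y⁻¹ ≤ ν y ∧ ν y ≤ κ₂ * y⁻¹ * ℓ y⁻¹)
    (hscal : ∀ r R : ℝ, 1 ≤ r → r ≤ R → ℓ R / ℓ r ≤ c * (R / r) ^ α₂)
    (hint : IntegrableOn (fun y => min 1 (y ^ 2) * ν y) (Set.Ioi (0:ℝ)))
    (ψ : ℝ → ℝ)
    (hψ : ∀ x, ψ x = 2 * ∫ y in Set.Ioi (0:ℝ), (1 - Real.cos (x * y)) * ν y) :
    ∀ lam > (1:ℝ), ∃ C > (0:ℝ), ∀ x ≥ (1:ℝ), ψ (lam * x) - ψ x ≤ C * ℓ x := by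
  intro lam hlam
  have h2α : (0:ℝ) < 2 - α₂ := by linarith
  have hlam0 : (0:ℝ) < lam := lt_trans one_pos hlam
  refine ⟨lam^2 * κ₂ * c / (2 - α₂) + 8 * κ₂, by positivity, ?_⟩
  intro x hx
  have hx0 : (0:ℝ) < x := lt_of_lt_of_le one_pos hx
  have hlx : (1:ℝ) ≤ lam * x := by nlinarith
  have hlx0 : (0:ℝ) < lam * x := by positivity
  set a : ℝ := x⁻¹ with ha
  have ha0 : 0 < a := by positivity
  have ha1 : a ≤ 1 := by
    rw [ha]
    exact inv_le_one_of_one_le₀ hx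
  have hℓx : 0 < ℓ x := hℓpos x hx0
  -- measurability of ν on Ioi 0
  have hνmeas : AEStronglyMeasurable ν (volume.restrict (Set.Ioi (0:ℝ))) := by
    have h1 := hint.aestronglyMeasurable
    have h2 : AEStronglyMeasurable (fun y : ℝ => (min 1 (y^2))⁻¹)
        (volume.restrict (Set.Ioi (0:ℝ))) :=
      ((measurable_const.min (measurable_id.pow_const 2)).inv).aestronglyMeasurable
    refine (h2.mul h1).congr ?_
    filter_upwards [self_mem_ae_restrict measurableSet_Ioi] with y hy
    have hy0 : (0:ℝ) < y := hy
    have hm : min 1 (y^2) ≠ 0 := (lt_min one_pos (by positivity)).ne'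
    show (min 1 (y^2))⁻¹ * (min 1 (y^2) * ν y) = ν y
    rw [inv_mul_cancel_left₀ hm]
  -- integrability of (1 - cos(z y)) ν on Ioi 0 for z ≥ 1
  have hIz : ∀ z : ℝ, 1 ≤ z →
      IntegrableOn (fun y => (1 - Real.cos (z*y)) * ν y) (Set.Ioi (0:ℝ)) := by
    intro z hz
    have hz0 : (0:ℝ) < z := lt_of_lt_of_le one_pos hz
    have hmaj : Integrable (fun y => 2*z^2 * (min 1 (y^2) * ν y))
        (volume.restrict (Set.Ioi (0:ℝ))) := hint.const_mul _
    refine hmaj.mono ?_ ?_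
    · have hcont : Continuous (fun y : ℝ => 1 - Real.cos (z*y)) :=
        continuous_const.sub (Real.continuous_cos.comp (continuous_const.mul continuous_id))
      exact hcont.aestronglyMeasurable.mul hνmeas
    · filter_upwards [self_mem_ae_restrict measurableSet_Ioi] with y hy
      have hy0 : (0:ℝ) < y := hy
      have hν0 := (hνpos y hy0).le
      have h1 : 0 ≤ 1 - Real.cos (z*y) := by nlinarith [Real.cos_le_one (z*y)]
      have hmin0 : (0:ℝ) ≤ min 1 (y^2) := le_min zero_le_one (by positivity)
      rw [Real.norm_eq_abs, Real.norm_eq_abs, abs_of_nonneg (mul_nonneg h1 hν0),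
        abs_of_nonneg (by positivity)]
      have hbound : 1 - Real.cos (z*y) ≤ 2*z^2 * min 1 (y^2) := by
        rcases le_or_gt y 1 with h | h
        · have hm : min 1 (y^2) = y^2 := min_eq_right (by nlinarith)
          rw [hm]
          have := Real.one_sub_sq_div_two_le_cos (x := z*y)
          nlinarith
        · have hm : min 1 (y^2) = 1 := min_eq_left (by nlinarith)
          rw [hm]
          nlinarith [Real.neg_one_le_cos (z*y)]
      calc (1 - Real.cos (z*y)) * ν y ≤ (2*z^2*min 1 (y^2)) * ν y :=
            mul_le_mul_of_nonneg_right hbound hν0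
      _ = 2*z^2 * (min 1 (y^2) * ν y) := by ring
  have hI1 := hIz x hx
  have hI2 := hIz (lam*x) hlx
  set D : ℝ → ℝ := fun y => (Real.cos (x*y) - Real.cos (lam*x*y)) * ν y with hD
  have hdiff : ψ (lam*x) - ψ x = 2 * ∫ y in Set.Ioi (0:ℝ), D y := by
    rw [hψ, hψ, ← mul_sub, ← integral_sub hI2 hI1]
    congr 1
    refine integral_congr_ae (Filter.Eventually.of_forall fun y => ?_)
    simp only [hD]
    ring
  have hDint : IntegrableOn D (Set.Ioi (0:ℝ)) := by
    refine IntegrableOn.congr_fun (f := (fun y => (1 - Real.cos (lam*x*y)) * ν y) -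
      (fun y => (1 - Real.cos (x*y)) * ν y)) (hI2.sub hI1) (fun y _ => ?_) measurableSet_Ioi
    simp only [Pi.sub_apply, hD]
    ring
  have hsplit : ∫ y in Set.Ioi (0:ℝ), D y
      = (∫ y in Set.Ioc 0 a, D y) + ∫ y in Set.Ioi a, D y := by
    rw [← Set.Ioc_union_Ioi_eq_Ioi ha0.le]
    exact setIntegral_union Set.Ioc_disjoint_Ioi_same measurableSet_Ioi
      (hDint.mono_set Set.Ioc_subset_Ioi_self)
      (hDint.mono_set (Set.Ioi_subset_Ioi ha0.le))
  -- term 1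
  have hrpowInt : IntegrableOn (fun y : ℝ => (lam^2*x^2/2*κ₂*c*ℓ x * x^(-α₂)) * y^(1-α₂))
      (Set.Ioc 0 a) := by
    have h0 : IntegrableOn (fun y : ℝ => y^(1-α₂)) (Set.Ioc 0 a) := by
      rw [← intervalIntegrable_iff_integrableOn_Ioc_of_le ha0.le]
      exact intervalIntegral.intervalIntegrable_rpow' (by linarith)
    exact Integrable.const_mul h0 _
  have hpoint : ∀ y ∈ Set.Ioc (0:ℝ) a,
      D y ≤ (lam^2*x^2/2*κ₂*c*ℓ x * x^(-α₂)) * y^(1-α₂) := by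
    intro y hy
    have hy0 : 0 < y := hy.1
    have hya : y ≤ a := hy.2
    have hνy := hνpos y hy0
    have hcos : Real.cos (x*y) - Real.cos (lam*x*y) ≤ (lam*x*y)^2/2 := by
      have h1 := Real.one_sub_sq_div_two_le_cos (x := lam*x*y)
      have h2 := Real.cos_le_one (x*y)
      linarith
    have hstep1 : D y ≤ (lam*x*y)^2/2 * ν y := mul_le_mul_of_nonneg_right hcos hνy.le
    have hxy : x ≤ y⁻¹ := by
      have h1 : x * y ≤ 1 := by
        calc x * y ≤ x * x⁻¹ := mul_le_mul_of_nonneg_left hya hx0.le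
        _ = 1 := mul_inv_cancel₀ hx0.ne'
      calc x = (x*y)*y⁻¹ := by field_simp
      _ ≤ 1 * y⁻¹ := mul_le_mul_of_nonneg_right h1 (inv_nonneg.2 hy0.le)
      _ = y⁻¹ := one_mul _
    have hsc := hscal x y⁻¹ hx hxy
    have hℓy : ℓ y⁻¹ ≤ c * (y⁻¹/x)^α₂ * ℓ x := by
      rw [div_le_iff₀ hℓx] at hsc
      linarith
    have hνb : ν y ≤ κ₂ * y⁻¹ * (c * (y⁻¹/x)^α₂ * ℓ x) :=
      le_trans (hν y hy0).2 (mul_le_mul_of_nonneg_left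
        (le_trans (le_of_eq rfl) hℓy) (by positivity))
    have hr : (y⁻¹/x)^α₂ = y^(-α₂) * x^(-α₂) := by
      rw [div_eq_mul_inv, Real.mul_rpow (inv_nonneg.2 hy0.le) (inv_nonneg.2 hx0.le),
        Real.inv_rpow hy0.le, Real.inv_rpow hx0.le, ← Real.rpow_neg hy0.le,
        ← Real.rpow_neg hx0.le]
    rw [hr] at hνb
    have hfin : (lam*x*y)^2/2 * (κ₂ * y⁻¹ * (c * (y^(-α₂) * x^(-α₂)) * ℓ x))
        = (lam^2*x^2/2*κ₂*c*ℓ x * x^(-α₂)) * (y * y^(-α₂)) := by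
      have hyne : y ≠ 0 := hy0.ne'
      field_simp
    have hy1 : y * y^(-α₂) = y^(1-α₂) := by
      rw [sub_eq_add_neg, Real.rpow_add hy0, Real.rpow_one]
    calc D y ≤ (lam*x*y)^2/2 * ν y := hstep1
    _ ≤ (lam*x*y)^2/2 * (κ₂ * y⁻¹ * (c * (y^(-α₂) * x^(-α₂)) * ℓ x)) :=
        mul_le_mul_of_nonneg_left hνb (by positivity)
    _ = (lam^2*x^2/2*κ₂*c*ℓ x * x^(-α₂)) * (y * y^(-α₂)) := hfin
    _ = (lam^2*x^2/2*κ₂*c*ℓ x * x^(-α₂)) * y^(1-α₂) := by rw [hy1]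
  have hT1 : (∫ y in Set.Ioc 0 a, D y) ≤ lam^2*κ₂*c/(2*(2-α₂)) * ℓ x := by
    have hmono1 : (∫ y in Set.Ioc 0 a, D y)
        ≤ ∫ y in Set.Ioc 0 a, (lam^2*x^2/2*κ₂*c*ℓ x * x^(-α₂)) * y^(1-α₂) :=
      setIntegral_mono_on (hDint.mono_set Set.Ioc_subset_Ioi_self) hrpowInt
        measurableSet_Ioc hpoint
    have hcomp : (∫ y in Set.Ioc (0:ℝ) a, y^(1-α₂)) = a^(2-α₂)/(2-α₂) := by
      rw [← intervalIntegral.integral_of_le ha0.le,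
        integral_rpow (Or.inl (by linarith : (-1:ℝ) < 1 - α₂))]
      rw [Real.zero_rpow (by linarith : (1-α₂)+1 ≠ 0)]
      norm_num
      rw [show (1:ℝ) - α₂ + 1 = 2 - α₂ by ring]
    have hax : a^(2-α₂) = x^(α₂-2) := by
      rw [ha, Real.inv_rpow hx0.le, ← Real.rpow_neg hx0.le]
      norm_num
    have hxx : x^(-α₂) * x^(α₂-2) * x^2 = 1 := by
      have h2 : (x:ℝ)^(2:ℕ) = x^((2:ℕ):ℝ) := (Real.rpow_natCast x 2).symm
      rw [h2, ← Real.rpow_add hx0, ← Real.rpow_add hx0]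
      rw [show -α₂ + (α₂ - 2) + ((2:ℕ):ℝ) = (0:ℝ) by push_cast; ring, Real.rpow_zero]
    calc (∫ y in Set.Ioc 0 a, D y)
        ≤ ∫ y in Set.Ioc 0 a, (lam^2*x^2/2*κ₂*c*ℓ x * x^(-α₂)) * y^(1-α₂) := hmono1
    _ = (lam^2*x^2/2*κ₂*c*ℓ x * x^(-α₂)) * ∫ y in Set.Ioc (0:ℝ) a, y^(1-α₂) :=
        integral_const_mul _ _
    _ = (lam^2*x^2/2*κ₂*c*ℓ x * x^(-α₂)) * (x^(α₂-2)/(2-α₂)) := by rw [hcomp, hax]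
    _ = lam^2*κ₂*c/(2*(2-α₂)) * ℓ x * (x^(-α₂) * x^(α₂-2) * x^2) := by
        field_simp
    _ = lam^2*κ₂*c/(2*(2-α₂)) * ℓ x := by rw [hxx, mul_one]
  -- term 2
  have hνIoiInt : IntegrableOn ν (Set.Ioi a) := by
    have hsub : Set.Ioi a ⊆ Set.Ioi (0:ℝ) := Set.Ioi_subset_Ioi ha0.le
    refine ((hint.mono_set hsub).const_mul ((a^2)⁻¹)).mono
      (hνmeas.mono_measure (Measure.restrict_mono hsub le_rfl)) ?_
    filter_upwards [self_mem_ae_restrict measurableSet_Ioi] with y hy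
    have hy0 : 0 < y := lt_trans ha0 hy
    have hmin : a^2 ≤ min 1 (y^2) := by
      refine le_min (by nlinarith) (by nlinarith [le_of_lt (show a < y from hy)])
    have hν0 := (hνpos y hy0).le
    have hmin0 : (0:ℝ) ≤ min 1 (y^2) := le_trans (by positivity) hmin
    rw [Real.norm_eq_abs, Real.norm_eq_abs, abs_of_nonneg hν0,
      abs_of_nonneg (mul_nonneg (by positivity) (mul_nonneg hmin0 hν0))]
    calc ν y = (a^2)⁻¹ * (a^2 * ν y) :=
          (inv_mul_cancel_left₀ (by positivity : (a:ℝ)^2 ≠ 0) _).symm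
    _ ≤ (a^2)⁻¹ * (min 1 (y^2) * ν y) := by
        refine mul_le_mul_of_nonneg_left (mul_le_mul_of_nonneg_right hmin hν0) (by positivity)
  have hmono' : ∀ r s : ℝ, a ≤ r → r ≤ s → ν s ≤ ν r := fun r s hr hrs =>
    hνmono r s (lt_of_lt_of_le ha0 hr) hrs
  have hpos' : ∀ y, a ≤ y → 0 ≤ ν y := fun y hy => (hνpos y (lt_of_lt_of_le ha0 hy)).le
  have hosc1 := osc_bound ν a x hx0 hmono' hpos' hνIoiInt
  have hosc2 := osc_bound ν a (lam*x) hlx0 hmono' hpos' hνIoiInt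
  have hcosint : ∀ z : ℝ, 0 < z → IntegrableOn (fun y => Real.cos (z*y) * ν y) (Set.Ioi a) := by
    intro z hz
    refine Integrable.mono (f := fun y => Real.cos (z*y) * ν y) hνIoiInt
      (((Real.continuous_cos.comp
      (continuous_const.mul continuous_id)).aestronglyMeasurable).mul
      (hνmeas.mono_measure (Measure.restrict_mono (Set.Ioi_subset_Ioi ha0.le) le_rfl))) ?_
    filter_upwards [self_mem_ae_restrict measurableSet_Ioi] with y hy
    have hy0 : 0 < y := lt_trans ha0 hy
    rw [Real.norm_eq_abs, Real.norm_eq_abs, abs_mul, abs_of_nonneg (hνpos y hy0).le]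
    calc |Real.cos (z*y)| * ν y ≤ 1 * ν y :=
          mul_le_mul_of_nonneg_right (Real.abs_cos_le_one _) (hνpos y hy0).le
    _ = ν y := one_mul _
  have hT2split : ∫ y in Set.Ioi a, D y
      = (∫ y in Set.Ioi a, Real.cos (x*y)*ν y) - ∫ y in Set.Ioi a, Real.cos (lam*x*y)*ν y := by
    rw [← integral_sub (hcosint x hx0) (hcosint (lam*x) hlx0)]
    refine setIntegral_congr_fun measurableSet_Ioi (fun y hy => ?_)
    simp only [hD]
    ring
  have hνa : ν a ≤ κ₂ * x * ℓ x := by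
    have h := (hν a ha0).2
    rw [ha, inv_inv] at h
    exact h
  have hνa0 : 0 ≤ ν a := (hνpos a ha0).le
  have hT2 : (∫ y in Set.Ioi a, D y) ≤ 4 * κ₂ * ℓ x := by
    rw [hT2split]
    have h1 : (∫ y in Set.Ioi a, Real.cos (x*y)*ν y) ≤ 2 * ν a / x :=
      le_trans (le_abs_self _) hosc1
    have h2 : -(∫ y in Set.Ioi a, Real.cos (lam*x*y)*ν y) ≤ 2 * ν a / (lam*x) :=
      le_trans (neg_le_abs _) hosc2
    have h3 : 2 * ν a / x ≤ 2 * κ₂ * ℓ x := by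
      rw [div_le_iff₀ hx0]
      nlinarith
    have h4 : 2 * ν a / (lam*x) ≤ 2 * κ₂ * ℓ x := by
      rw [div_le_iff₀ hlx0]
      nlinarith
    linarith
  calc ψ (lam*x) - ψ x = 2 * ((∫ y in Set.Ioc 0 a, D y) + ∫ y in Set.Ioi a, D y) := by
        rw [hdiff, hsplit]
  _ ≤ 2 * (lam^2*κ₂*c/(2*(2-α₂)) * ℓ x + 4 * κ₂ * ℓ x) := by linarith
  _ = (lam^2 * κ₂ * c / (2 - α₂) + 8 * κ₂) * ℓ x := by
      field_simp
      ring
end
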